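/- arXiv:2301.13565 — 2 statements merged into one kernel-verified Lean document; each statement's English description precedes it below -/
import Mathlib

section
/- Strong duality for the discrete Wasserstein DRO linear program: the optimal value of max over P ∈ ℝ_{+}^{n×m} of Σ_{i,j} h_j P_{ij} subject to Σ_{i,j} d_{ij}^p P_{ij} ≤ ε^p and Σ_j P_{ij} = μ̄_i for all i, equals the optimal value of min over λ₀ ≥ 0 of ε^p λ₀ + Σ_{i=1}^n μ̄_i · max_{j ∈ [m]} (h_j − λ₀ d_{ij}^p), provided the primal is feasible. -/
open Finset

/-- Per-row dual envelope value. -/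
noncomputable def droMrow (m : ℕ) [NeZero m] (h : Fin m → ℝ) (cRow : Fin m → ℝ)
    (lam : ℝ) : ℝ :=
  Finset.univ.sup' Finset.univ_nonempty fun j : Fin m => h j - lam * cRow j

theorem dro_aux (n m : ℕ) (hn : 0 < n) [NeZero m]
    (h : Fin m → ℝ) (c : Fin n → Fin m → ℝ) (hc0 : ∀ i j, 0 ≤ c i j)
    (B : ℝ) (hB : 0 < B)
    (μbar : Fin n → ℝ) (hμ0 : ∀ i, 0 ≤ μbar i)
    (hfeas : ∃ P : Fin n → Fin m → ℝ,
      (∀ i j, 0 ≤ P i j) ∧ (∀ i, ∑ j, P i j = μbar i)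
        ∧ ∑ i, ∑ j, c i j * P i j ≤ B) :
    sSup {v : ℝ | ∃ P : Fin n → Fin m → ℝ,
        (∀ i j, 0 ≤ P i j) ∧ (∀ i, ∑ j, P i j = μbar i)
          ∧ (∑ i, ∑ j, c i j * P i j ≤ B)
          ∧ v = ∑ i, ∑ j, h j * P i j}
      = sInf {v : ℝ | ∃ lam : ℝ, 0 ≤ lam ∧
          v = B * lam + ∑ i, μbar i * droMrow m h (c i) lam} := by
  classical
  haveI : Nonempty (Fin n) := ⟨⟨0, hn⟩⟩
  set S : Set ℝ := {v : ℝ | ∃ P : Fin n → Fin m → ℝ,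
        (∀ i j, 0 ≤ P i j) ∧ (∀ i, ∑ j, P i j = μbar i)
          ∧ (∑ i, ∑ j, c i j * P i j ≤ B)
          ∧ v = ∑ i, ∑ j, h j * P i j} with hSdef
  set D : Set ℝ := {v : ℝ | ∃ lam : ℝ, 0 ≤ lam ∧
          v = B * lam + ∑ i, μbar i * droMrow m h (c i) lam} with hDdef
  -- basic facts about droMrow
  have hMle : ∀ (lam : ℝ) (i : Fin n) (j : Fin m),
      h j - lam * c i j ≤ droMrow m h (c i) lam := by
    intro lam i j
    simp only [droMrow]
    exact Finset.le_sup' (fun j => h j - lam * c i j) (Finset.mem_univ j)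
  -- weak duality
  have weak : ∀ P : Fin n → Fin m → ℝ, (∀ i j, 0 ≤ P i j) →
      (∀ i, ∑ j, P i j = μbar i) → (∑ i, ∑ j, c i j * P i j ≤ B) →
      ∀ lam : ℝ, 0 ≤ lam →
      ∑ i, ∑ j, h j * P i j ≤ B * lam + ∑ i, μbar i * droMrow m h (c i) lam := by
    intro P hP hProw hPc lam hlam
    have key : ∀ i : Fin n, ∑ j, h j * P i j
        ≤ μbar i * droMrow m h (c i) lam + lam * ∑ j, c i j * P i j := by
      intro i
      have hterm : ∀ j : Fin m, h j * P i j
          ≤ droMrow m h (c i) lam * P i j + lam * (c i j * P i j) := by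
        intro j
        have h1 := hMle lam i j
        nlinarith [hP i j]
      calc ∑ j, h j * P i j
          ≤ ∑ j, (droMrow m h (c i) lam * P i j + lam * (c i j * P i j)) :=
            Finset.sum_le_sum fun j _ => hterm j
        _ = droMrow m h (c i) lam * (∑ j, P i j) + lam * ∑ j, c i j * P i j := by
            rw [Finset.sum_add_distrib, ← Finset.mul_sum, ← Finset.mul_sum]
        _ = μbar i * droMrow m h (c i) lam + lam * ∑ j, c i j * P i j := by
            rw [hProw i]; ring
    have hsum : ∑ i, ∑ j, h j * P i j
        ≤ (∑ i, μbar i * droMrow m h (c i) lam) + lam * ∑ i, ∑ j, c i j * P i j := by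
      calc ∑ i, ∑ j, h j * P i j
          ≤ ∑ i, (μbar i * droMrow m h (c i) lam + lam * ∑ j, c i j * P i j) :=
            Finset.sum_le_sum fun i _ => key i
        _ = (∑ i, μbar i * droMrow m h (c i) lam) + lam * ∑ i, ∑ j, c i j * P i j := by
            rw [Finset.sum_add_distrib, ← Finset.mul_sum]
    have hcB : lam * (∑ i, ∑ j, c i j * P i j) ≤ lam * B :=
      mul_le_mul_of_nonneg_left hPc hlam
    linarith
  -- nonemptiness and bounds
  obtain ⟨P0, hP0, hP0row, hP0c⟩ := hfeas
  have hSne : S.Nonempty := ⟨∑ i, ∑ j, h j * P0 i j, ⟨P0, hP0, hP0row, hP0c, rfl⟩⟩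
  have hDne : D.Nonempty :=
    ⟨B * 0 + ∑ i, μbar i * droMrow m h (c i) 0, ⟨0, le_rfl, rfl⟩⟩
  have hSbdd : BddAbove S := by
    refine ⟨B * 0 + ∑ i, μbar i * droMrow m h (c i) 0, ?_⟩
    rintro v ⟨P, hP, hProw, hPc, rfl⟩
    exact weak P hP hProw hPc 0 le_rfl
  have hDbdd : BddBelow D := by
    refine ⟨∑ i, ∑ j, h j * P0 i j, ?_⟩
    rintro w ⟨lam, hlam, rfl⟩
    exact weak P0 hP0 hP0row hP0c lam hlam
  -- first inequality
  have le1 : sSup S ≤ sInf D := by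
    apply csSup_le hSne
    rintro v ⟨P, hP, hProw, hPc, rfl⟩
    apply le_csInf hDne
    rintro w ⟨lam, hlam, rfl⟩
    exact weak P hP hProw hPc lam hlam
  -- minimal cost per row
  have hminex : ∀ i : Fin n, ∃ j : Fin m, ∀ k : Fin m, c i j ≤ c i k := by
    intro i
    obtain ⟨j, -, hj⟩ := Finset.exists_min_image Finset.univ (c i) Finset.univ_nonempty
    exact ⟨j, fun k => hj k (Finset.mem_univ k)⟩
  choose jmin hjmin using hminex
  set Cmin : ℝ := ∑ i, μbar i * c i (jmin i) with hCmin
  have hCminB : Cmin ≤ B := by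
    have : ∀ i : Fin n, μbar i * c i (jmin i) ≤ ∑ j, c i j * P0 i j := by
      intro i
      calc μbar i * c i (jmin i) = ∑ j, c i (jmin i) * P0 i j := by
            rw [← Finset.mul_sum, hP0row i]; ring
        _ ≤ ∑ j, c i j * P0 i j :=
            Finset.sum_le_sum fun j _ =>
              mul_le_mul_of_nonneg_right (hjmin i j) (hP0 i j)
    calc Cmin ≤ ∑ i, ∑ j, c i j * P0 i j := Finset.sum_le_sum fun i _ => this i
      _ ≤ B := hP0c
  -- point-mass primal helper
  have point_mass : ∀ js : Fin n → Fin m,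
      (∀ i, ∑ j, (fun i j => if j = js i then μbar i else 0) i j = μbar i)
      ∧ (∑ i, ∑ j, c i j * (if j = js i then μbar i else 0) = ∑ i, μbar i * c i (js i))
      ∧ (∑ i, ∑ j, h j * (if j = js i then μbar i else 0) = ∑ i, μbar i * h (js i)) := by
    intro js
    refine ⟨fun i => ?_, ?_, ?_⟩
    · simp
    · refine Finset.sum_congr rfl fun i _ => ?_
      rw [Finset.sum_eq_single (js i)]
      · simp [mul_comm]
      · intro b _ hb; simp [hb]
      · intro hmem; exact absurd (Finset.mem_univ _) hmem
    · refine Finset.sum_congr rfl fun i _ => ?_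
      rw [Finset.sum_eq_single (js i)]
      · simp [mul_comm]
      · intro b _ hb; simp [hb]
      · intro hmem; exact absurd (Finset.mem_univ _) hmem
  have le2 : sInf D ≤ sSup S := by
    rcases eq_or_lt_of_le hCminB with hA | hSlater
    · -- degenerate case: Cmin = B
      -- best h value among cheapest columns
      have hFne : ∀ i : Fin n,
          (Finset.univ.filter (fun j => c i j ≤ c i (jmin i))).Nonempty :=
        fun i => ⟨jmin i, by simp⟩
      set maxH : Fin n → ℝ := fun i => (Finset.univ.filter
        (fun j => c i j ≤ c i (jmin i))).sup' (hFne i) h with hmaxH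
      have hjstar : ∀ i : Fin n, ∃ j, c i j ≤ c i (jmin i) ∧ maxH i = h j := by
        intro i
        obtain ⟨j, hjmem, hj⟩ := Finset.exists_mem_eq_sup' (hFne i) h
        exact ⟨j, (Finset.mem_filter.mp hjmem).2, hj⟩
      choose jstar hjstar1 hjstar2 using hjstar
      -- threshold Λ
      set ratio : Fin n × Fin m → ℝ := fun q =>
        if c q.1 (jmin q.1) < c q.1 q.2
        then (h q.2 - maxH q.1) / (c q.1 q.2 - c q.1 (jmin q.1)) else 0 with hratio
      set Lam : ℝ := max 0 (Finset.univ.sup' Finset.univ_nonempty ratio) with hLam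
      have hLam0 : 0 ≤ Lam := le_max_left _ _
      have key : ∀ (i : Fin n) (j : Fin m),
          h j - Lam * c i j ≤ maxH i - Lam * c i (jmin i) := by
        intro i j
        rcases lt_or_ge (c i (jmin i)) (c i j) with hlt | hle
        · have h1 : ratio (i, j) ≤ Lam :=
            le_trans (Finset.le_sup' ratio (Finset.mem_univ (i, j))) (le_max_right _ _)
          rw [hratio] at h1
          simp only [if_pos hlt] at h1
          rw [div_le_iff₀ (by linarith)] at h1
          nlinarith
        · have hjF : j ∈ Finset.univ.filter (fun k => c i k ≤ c i (jmin i)) := by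
            simp [hle]
          have h2 : h j ≤ maxH i := Finset.le_sup' h hjF
          have h3 : c i j = c i (jmin i) := le_antisymm hle (hjmin i j)
          rw [h3]; linarith
      have hMval : ∀ i : Fin n,
          droMrow m h (c i) Lam = maxH i - Lam * c i (jmin i) := by
        intro i
        apply le_antisymm
        · simp only [droMrow]
          exact Finset.sup'_le _ _ fun j _ => key i j
        · have h1 := hMle Lam i (jstar i)
          have h2 : c i (jstar i) = c i (jmin i) :=
            le_antisymm (hjstar1 i) (hjmin i (jstar i))
          rw [hjstar2 i, ← h2]; linarith
      -- dual value at Lam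
      have hw : B * Lam + ∑ i, μbar i * droMrow m h (c i) Lam
          = ∑ i, μbar i * maxH i := by
        have : ∑ i, μbar i * droMrow m h (c i) Lam
            = (∑ i, μbar i * maxH i) - Lam * Cmin := by
          rw [hCmin, Finset.mul_sum, ← Finset.sum_sub_distrib]
          refine Finset.sum_congr rfl fun i _ => ?_
          rw [hMval i]; ring
        rw [this, ← hA]; ring
      have hwD : (B * Lam + ∑ i, μbar i * droMrow m h (c i) Lam) ∈ D :=
        ⟨Lam, hLam0, rfl⟩
      -- primal value equals it
      obtain ⟨hrow, hcost, hval⟩ := point_mass jstar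
      have hvalS : (∑ i, μbar i * h (jstar i)) ∈ S := by
        refine ⟨fun i j => if j = jstar i then μbar i else 0,
          fun i j => by dsimp only; split <;> [exact hμ0 i; exact le_rfl], hrow, ?_, ?_⟩
        · rw [hcost]
          have : ∑ i, μbar i * c i (jstar i) = Cmin := by
            refine Finset.sum_congr rfl fun i _ => ?_
            rw [le_antisymm (hjstar1 i) (hjmin i (jstar i))]
          rw [this, hA]
        · rw [hval]
      have heq : ∑ i, μbar i * maxH i = ∑ i, μbar i * h (jstar i) :=
        Finset.sum_congr rfl fun i _ => by rw [hjstar2 i]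
      calc sInf D ≤ B * Lam + ∑ i, μbar i * droMrow m h (c i) Lam :=
            csInf_le hDbdd hwD
        _ = ∑ i, μbar i * h (jstar i) := by rw [hw, heq]
        _ ≤ sSup S := le_csSup hSbdd hvalS
    · -- Slater case: Cmin < B
      set V : ℝ := sSup S with hV
      set K : Set (ℝ × ℝ) := {q : ℝ × ℝ | ∃ P : Fin n → Fin m → ℝ,
        (∀ i j, 0 ≤ P i j) ∧ (∀ i, ∑ j, P i j = μbar i)
          ∧ q = (∑ i, ∑ j, c i j * P i j, ∑ i, ∑ j, h j * P i j)} with hK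
      set O : Set (ℝ × ℝ) := {q : ℝ × ℝ | q.1 < B ∧ V < q.2} with hO
      have hOopen : IsOpen O :=
        IsOpen.and (isOpen_lt continuous_fst continuous_const)
          (isOpen_lt continuous_const continuous_snd)
      have hOconv : Convex ℝ O := by
        have h1 : Convex ℝ {q : ℝ × ℝ | q.1 < B} :=
          convex_halfSpace_lt ⟨fun _ _ => rfl, fun _ _ => rfl⟩ B
        have h2 : Convex ℝ {q : ℝ × ℝ | V < q.2} :=
          convex_halfSpace_gt ⟨fun _ _ => rfl, fun _ _ => rfl⟩ V
        exact h1.inter h2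
      have hKconv : Convex ℝ K := by
        rintro q1 ⟨P1, hP1, hP1row, rfl⟩ q2 ⟨P2, hP2, hP2row, rfl⟩ a b ha hb hab
        refine ⟨fun i j => a * P1 i j + b * P2 i j,
          fun i j => add_nonneg (mul_nonneg ha (hP1 i j)) (mul_nonneg hb (hP2 i j)),
          fun i => ?_, ?_⟩
        · rw [Finset.sum_add_distrib, ← Finset.mul_sum, ← Finset.mul_sum,
            hP1row i, hP2row i, ← add_mul, hab, one_mul]
        · have e1 : ∑ i, ∑ j, c i j * (a * P1 i j + b * P2 i j)
              = a * (∑ i, ∑ j, c i j * P1 i j) + b * (∑ i, ∑ j, c i j * P2 i j) := by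
            rw [Finset.mul_sum, Finset.mul_sum, ← Finset.sum_add_distrib]
            refine Finset.sum_congr rfl fun i _ => ?_
            rw [Finset.mul_sum, Finset.mul_sum, ← Finset.sum_add_distrib]
            refine Finset.sum_congr rfl fun j _ => by ring
          have e2 : ∑ i, ∑ j, h j * (a * P1 i j + b * P2 i j)
              = a * (∑ i, ∑ j, h j * P1 i j) + b * (∑ i, ∑ j, h j * P2 i j) := by
            rw [Finset.mul_sum, Finset.mul_sum, ← Finset.sum_add_distrib]
            refine Finset.sum_congr rfl fun i _ => ?_
            rw [Finset.mul_sum, Finset.mul_sum, ← Finset.sum_add_distrib]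
            refine Finset.sum_congr rfl fun j _ => by ring
          rw [e1, e2]
          rfl
      have hdisj : Disjoint O K := by
        rw [Set.disjoint_left]
        rintro q ⟨hq1, hq2⟩ ⟨P, hP, hProw, rfl⟩
        have : (∑ i, ∑ j, h j * P i j) ∈ S :=
          ⟨P, hP, hProw, le_of_lt hq1, rfl⟩
        exact absurd (le_csSup hSbdd this) (not_le.mpr hq2)
      obtain ⟨f, cst, hfO, hfK⟩ := geometric_hahn_banach_open hOconv hOopen hKconv hdisj
      set a : ℝ := f (1, 0) with haf
      set b : ℝ := f (0, 1) with hbf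
      have hf : ∀ x y : ℝ, f (x, y) = x * a + y * b := by
        intro x y
        have : (x, y) = x • ((1 : ℝ), (0 : ℝ)) + y • ((0 : ℝ), (1 : ℝ)) := by
          simp [Prod.ext_iff]
        rw [this, map_add, map_smul, map_smul, smul_eq_mul, smul_eq_mul]
      -- a ≥ 0
      have ha : 0 ≤ a := by
        by_contra hneg
        push_neg at hneg
        set x : ℝ := min (B - 1) ((cst - (V + 1) * b) / a) with hx
        have hxO : (x, V + 1) ∈ O := by
          constructor
          · exact lt_of_le_of_lt (min_le_left _ _) (by linarith)
          · exact lt_add_of_pos_right V one_pos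
        have h1 := hfO _ hxO
        rw [hf] at h1
        have h2 : x ≤ (cst - (V + 1) * b) / a := min_le_right _ _
        have h3 : ((cst - (V + 1) * b) / a) * a ≤ x * a :=
          mul_le_mul_of_nonpos_right h2 (le_of_lt hneg)
        rw [div_mul_cancel₀ _ (ne_of_lt hneg)] at h3
        linarith
      -- b ≤ 0
      have hb : b ≤ 0 := by
        by_contra hneg
        push_neg at hneg
        set y : ℝ := max (V + 1) ((cst - (B - 1) * a) / b) with hy
        have hyO : ((B - 1 : ℝ), y) ∈ O := by
          constructor
          · simp only; linarith
          · exact lt_of_lt_of_le (by linarith) (le_max_left _ _)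
        have h1 := hfO _ hyO
        rw [hf] at h1
        have h2 : (cst - (B - 1) * a) / b ≤ y := le_max_right _ _
        have h3 : ((cst - (B - 1) * a) / b) * b ≤ y * b :=
          mul_le_mul_of_nonneg_right h2 (le_of_lt hneg)
        rw [div_mul_cancel₀ _ (ne_of_gt hneg)] at h3
        linarith
      rcases eq_or_lt_of_le hb with hb0 | hbneg
      · -- b = 0 : contradiction with Slater
        exfalso
        obtain ⟨hrow, hcost, hval⟩ := point_mass jmin
        have hqK : ((Cmin : ℝ), ∑ i, μbar i * h (jmin i)) ∈ K := by
          refine ⟨fun i j => if j = jmin i then μbar i else 0,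
            fun i j => by dsimp only; split <;> [exact hμ0 i; exact le_rfl], hrow, ?_⟩
          rw [hcost, hval]
        have h1 := hfK _ hqK
        rw [hf] at h1
        have hqO : ((Cmin : ℝ), V + 1) ∈ O := ⟨hSlater, lt_add_of_pos_right V one_pos⟩
        have h2 := hfO _ hqO
        rw [hf] at h2
        rw [hb0] at h1 h2
        linarith
      · -- b < 0 : extract dual multiplier
        set lam : ℝ := a / (-b) with hlam
        have hlam0 : 0 ≤ lam := div_nonneg ha (by linarith)
        have hab : a = lam * (-b) := by
          have hbne : (-b) ≠ 0 := ne_of_gt (by linarith)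
          rw [hlam, div_mul_cancel₀ a hbne]
        -- boundary estimate: a*B + b*V ≤ cst
        have hbd : a * B + b * V ≤ cst := by
          apply le_of_forall_pos_lt_add
          intro ε hε
          set η : ℝ := ε / (a - b) with hη
          have habp : 0 < a - b := by linarith
          have hηpos : 0 < η := div_pos hε habp
          have hqO : ((B - η : ℝ), V + η) ∈ O :=
            ⟨by simp only; linarith, lt_add_of_pos_right V hηpos⟩
          have h1 := hfO _ hqO
          rw [hf] at h1
          have h2 : η * (a - b) = ε := by
            rw [hη, div_mul_cancel₀ _ (ne_of_gt habp)]
          nlinarith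
        -- pick per-row argmax
        have hsel : ∀ i : Fin n, ∃ j : Fin m,
            droMrow m h (c i) lam = h j - lam * c i j := by
          intro i
          obtain ⟨j, -, hj⟩ := Finset.exists_mem_eq_sup' Finset.univ_nonempty
            (fun j : Fin m => h j - lam * c i j)
          exact ⟨j, by simp only [droMrow]; exact hj⟩
        choose jsel hjsel using hsel
        obtain ⟨hrow, hcost, hval⟩ := point_mass jsel
        set xhat : ℝ := ∑ i, μbar i * c i (jsel i) with hxhat
        set yhat : ℝ := ∑ i, μbar i * h (jsel i) with hyhat
        have hqK : ((xhat : ℝ), yhat) ∈ K := by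
          refine ⟨fun i j => if j = jsel i then μbar i else 0,
            fun i j => by dsimp only; split <;> [exact hμ0 i; exact le_rfl], hrow, ?_⟩
          rw [hcost, hval]
        have h1 := hfK _ hqK
        rw [hf] at h1
        -- the dual value
        have hMsum : ∑ i, μbar i * droMrow m h (c i) lam = yhat - lam * xhat := by
          rw [hyhat, hxhat, Finset.mul_sum, ← Finset.sum_sub_distrib]
          refine Finset.sum_congr rfl fun i _ => ?_
          rw [hjsel i]; ring
        have hwD : (B * lam + ∑ i, μbar i * droMrow m h (c i) lam) ∈ D :=
          ⟨lam, hlam0, rfl⟩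
        have hkey : B * lam + (yhat - lam * xhat) ≤ V := by
          have hnb : 0 < -b := by linarith
          have hmul : (-b) * (B * lam + (yhat - lam * xhat)) ≤ (-b) * V := by
            have expand : (-b) * (B * lam + (yhat - lam * xhat))
                = a * B + (-b) * yhat - a * xhat := by
              rw [hab]; ring
            have : a * B + b * V ≤ xhat * a + yhat * b := le_trans hbd h1
            linarith [expand, this]
          exact le_of_mul_le_mul_left hmul hnb
        calc sInf D ≤ B * lam + ∑ i, μbar i * droMrow m h (c i) lam :=
              csInf_le hDbdd hwD
          _ ≤ V := by rw [hMsum]; exact hkey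
          _ = sSup S := rfl
  exact le_antisymm le1 le2

/-- strong duality for the discrete Wasserstein DRO linear
program.  The optimal value of the primal transport LP equals the optimal value
of the one-dimensional dual over `λ₀ ≥ 0`. -/
theorem discrete_wasserstein_dro_strong_duality
    (n m : ℕ) (hn : 0 < n) [NeZero m]
    (h : Fin m → ℝ) (d : Fin n → Fin m → ℝ) (hd : ∀ i j, 0 ≤ d i j)
    (ε : ℝ) (hε : 0 < ε) (p : ℝ) (hp : 1 ≤ p)
    (μbar : Fin n → ℝ) (hμ0 : ∀ i, 0 ≤ μbar i) (hμ1 : ∑ i, μbar i = 1)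
    (hfeas : ∃ P : Fin n → Fin m → ℝ,
      (∀ i j, 0 ≤ P i j) ∧ (∀ i, ∑ j, P i j = μbar i)
        ∧ ∑ i, ∑ j, d i j ^ p * P i j ≤ ε ^ p) :
    sSup {v : ℝ | ∃ P : Fin n → Fin m → ℝ,
        (∀ i j, 0 ≤ P i j) ∧ (∀ i, ∑ j, P i j = μbar i)
          ∧ (∑ i, ∑ j, d i j ^ p * P i j ≤ ε ^ p)
          ∧ v = ∑ i, ∑ j, h j * P i j}
      = sInf {v : ℝ | ∃ lam : ℝ, 0 ≤ lam ∧
          v = ε ^ p * lam + ∑ i, μbar i *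
            (Finset.univ.sup' Finset.univ_nonempty
              fun j : Fin m => h j - lam * d i j ^ p)} := by
  have := dro_aux n m hn h (fun i j => d i j ^ p)
    (fun i j => Real.rpow_nonneg (hd i j) p) (ε ^ p)
    (Real.rpow_pos_of_pos hε p) μbar hμ0 hfeas
  simpa only [droMrow] using this
end

section
/- Weak duality for Wasserstein DRO: for every λ ≥ 0 and every P with W_p(P, P̄) ≤ ε, one has E_P h(ξ) ≤ λ ε^p + E_{P̄}[ sup_{ξ ∈ Ξ} (h(ξ) − λ d^p(ξ, ξ̄)) ], where the expectation on the right is over ξ̄ ∼ P̄. Consequently, sup_{P: W_p(P,P̄) ≤ ε} E_P h ≤ inf_{λ ≥ 0} { λ ε^p + E_{P̄} sup_ξ (h(ξ) − λ d^p(ξ, ·)) }. -/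
open MeasureTheory

/-- `π` is a coupling of `P` and `Q`. -/
def IsCoupling {Ξ : Type*} [MeasurableSpace Ξ]
    (π : Measure (Ξ × Ξ)) (P Q : Measure Ξ) : Prop :=
  π.map Prod.fst = P ∧ π.map Prod.snd = Q

/-- `P` lies in the order-`p` Wasserstein ball of radius `ε` around `Q`. -/
def MemWassersteinBall {Ξ : Type*} [PseudoMetricSpace Ξ] [MeasurableSpace Ξ]
    (P Q : Measure Ξ) (p ε : ℝ) : Prop :=
  ∃ π : Measure (Ξ × Ξ), IsProbabilityMeasure π ∧ IsCoupling π P Q ∧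
    ∫⁻ z, ENNReal.ofReal (dist z.1 z.2 ^ p) ∂π ≤ ENNReal.ofReal (ε ^ p)

/-- weak duality for Wasserstein DRO.  Here `φ lam ξ̄` is the
supremum `sup_ξ (h ξ − lam·d(ξ,ξ̄)^p)` (expressed by an `IsLUB` hypothesis).
For every `lam ≥ 0` and every `P` in the Wasserstein ball,
`E_P h ≤ lam ε^p + E_{P̄} φ lam`; consequently the worst-case value is bounded
by the dual infimum. -/
theorem wasserstein_dro_weak_duality
    {Ξ : Type*} [MetricSpace Ξ] [TopologicalSpace.SeparableSpace Ξ]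
    [CompleteSpace Ξ] [MeasurableSpace Ξ] [BorelSpace Ξ]
    (Pbar : Measure Ξ) [IsProbabilityMeasure Pbar]
    (p ε : ℝ) (hp : 1 ≤ p) (hε : 0 ≤ ε)
    (h : Ξ → ℝ) (hmeas : Measurable h)
    (φ : ℝ → Ξ → ℝ)
    (hφ : ∀ lam : ℝ, 0 ≤ lam → ∀ ξbar : Ξ,
      IsLUB (Set.range fun ξ => h ξ - lam * dist ξ ξbar ^ p) (φ lam ξbar))
    (hφint : ∀ lam : ℝ, 0 ≤ lam → Integrable (φ lam) Pbar) :
    (∀ lam : ℝ, 0 ≤ lam → ∀ P : Measure Ξ, IsProbabilityMeasure P →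
      MemWassersteinBall P Pbar p ε → Integrable h P →
        ∫ x, h x ∂P ≤ lam * ε ^ p + ∫ ξbar, φ lam ξbar ∂Pbar)
    ∧ ({r : ℝ | ∃ P : Measure Ξ, IsProbabilityMeasure P ∧
          MemWassersteinBall P Pbar p ε ∧ Integrable h P ∧
          r = ∫ x, h x ∂P}.Nonempty →
        sSup {r : ℝ | ∃ P : Measure Ξ, IsProbabilityMeasure P ∧
            MemWassersteinBall P Pbar p ε ∧ Integrable h P ∧
            r = ∫ x, h x ∂P}
          ≤ sInf {r : ℝ | ∃ lam : ℝ, 0 ≤ lam ∧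
              r = lam * ε ^ p + ∫ ξbar, φ lam ξbar ∂Pbar}) := by

  have key : ∀ lam : ℝ, 0 ≤ lam → ∀ P : Measure Ξ, IsProbabilityMeasure P →
      MemWassersteinBall P Pbar p ε → Integrable h P →
        ∫ x, h x ∂P ≤ lam * ε ^ p + ∫ ξbar, φ lam ξbar ∂Pbar := by
    intro lam hlam P hPprob ⟨π, hπprob, ⟨hfst, hsnd⟩, hπcost⟩ hint
    -- measurability of the cost
    have hdmeas : Measurable (fun z : Ξ × Ξ => dist z.1 z.2 ^ p) :=
      (measurable_fst.dist measurable_snd).pow_const p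
    have hdnn : ∀ z : Ξ × Ξ, 0 ≤ dist z.1 z.2 ^ p := fun z =>
      Real.rpow_nonneg dist_nonneg p
    -- the cost is integrable w.r.t. π
    have hεp : (0:ℝ) ≤ ε ^ p := Real.rpow_nonneg hε p
    have hcost_int : Integrable (fun z : Ξ × Ξ => dist z.1 z.2 ^ p) π := by
      refine ⟨hdmeas.aestronglyMeasurable, ?_⟩
      rw [hasFiniteIntegral_iff_ofReal (Filter.Eventually.of_forall hdnn)]
      exact lt_of_le_of_lt hπcost ENNReal.ofReal_lt_top
    -- ∫ cost ≤ ε^p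
    have hcost_le : ∫ z, dist z.1 z.2 ^ p ∂π ≤ ε ^ p := by
      rw [integral_eq_lintegral_of_nonneg_ae (Filter.Eventually.of_forall hdnn)
        hdmeas.aestronglyMeasurable]
      calc (∫⁻ z, ENNReal.ofReal (dist z.1 z.2 ^ p) ∂π).toReal
          ≤ (ENNReal.ofReal (ε ^ p)).toReal :=
            ENNReal.toReal_mono ENNReal.ofReal_ne_top hπcost
        _ = ε ^ p := ENNReal.toReal_ofReal hεp
    -- integrability of h ∘ fst and φ lam ∘ snd
    have hhf : Integrable (fun z : Ξ × Ξ => h z.1) π := by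
      have := hint
      rw [← hfst] at this
      exact (integrable_map_measure hmeas.aestronglyMeasurable
        measurable_fst.aemeasurable).mp this
    have hφf : Integrable (fun z : Ξ × Ξ => φ lam z.2) π := by
      have := hφint lam hlam
      rw [← hsnd] at this
      exact (integrable_map_measure this.aestronglyMeasurable
        measurable_snd.aemeasurable).mp
        ((hsnd ▸ this : Integrable (φ lam) (π.map Prod.snd)))
    -- pointwise bound
    have hpt : ∀ z : Ξ × Ξ, h z.1 ≤ lam * dist z.1 z.2 ^ p + φ lam z.2 := by
      intro z
      have := (hφ lam hlam z.2).1 ⟨z.1, rfl⟩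
      simp only at this
      linarith
    have h1 : ∫ x, h x ∂P = ∫ z, h z.1 ∂π := by
      rw [← hfst, integral_map measurable_fst.aemeasurable hmeas.aestronglyMeasurable]
    have h2 : ∫ z, φ lam z.2 ∂π = ∫ ξbar, φ lam ξbar ∂Pbar := by
      rw [← hsnd, integral_map measurable_snd.aemeasurable]
      rw [hsnd]
      exact (hφint lam hlam).aestronglyMeasurable
    calc ∫ x, h x ∂P = ∫ z, h z.1 ∂π := h1
      _ ≤ ∫ z, (lam * dist z.1 z.2 ^ p + φ lam z.2) ∂π :=
          integral_mono hhf ((hcost_int.const_mul lam).add hφf) hpt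
      _ = lam * ∫ z, dist z.1 z.2 ^ p ∂π + ∫ z, φ lam z.2 ∂π := by
          rw [integral_add (hcost_int.const_mul lam) hφf, integral_const_mul]
      _ ≤ lam * ε ^ p + ∫ ξbar, φ lam ξbar ∂Pbar := by
          rw [h2]
          exact add_le_add_left (mul_le_mul_of_nonneg_left hcost_le hlam) _
  refine ⟨key, fun hS => ?_⟩
  have hD : ((0:ℝ) * ε ^ p + ∫ ξbar, φ 0 ξbar ∂Pbar) ∈
      {r : ℝ | ∃ lam : ℝ, 0 ≤ lam ∧ r = lam * ε ^ p + ∫ ξbar, φ lam ξbar ∂Pbar} :=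
    ⟨0, le_refl 0, rfl⟩
  refine csSup_le hS ?_
  rintro r ⟨P, hPprob, hball, hint, rfl⟩
  refine le_csInf ⟨_, hD⟩ ?_
  rintro d ⟨lam, hlam, rfl⟩
  exact key lam hlam P hPprob hball hint
end
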